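/- Let Δ be a semiperfect ring, and let Λ = ⊕_{g∈G} Λ_g be a ring strongly graded by a group G with identity component Δ. If Δ is prime and basic, then Λ is a crossed product: for every g ∈ G, Λ_g ≅ Δ as left Δ-modules. -/

import Mathlib

open Pointwise


section Corner
variable {R : Type*} [Ring R] (S : AddSubgroup R) (e : R)

/-- `x` is a unit of the corner ring `eRe`, with witness inside `S`. -/
def CUaux (x : R) : Prop := ∃ y, y ∈ S ∧ y = e * y * e ∧ x * y = e ∧ y * x = e

variable {S e}

lemma corner_left {a : R} (he : e * e = e) (ha : a = e * a * e) : e * a = a := by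
  rw [ha, ← mul_assoc, ← mul_assoc, he]

lemma corner_right {a : R} (he : e * e = e) (ha : a = e * a * e) : a * e = a := by
  rw [ha, mul_assoc, he]

lemma corner_mul {a b : R} (he : e * e = e) (ha : a = e * a * e) (hb : b = e * b * e) :
    a * b = e * (a * b) * e := by
  rw [← mul_assoc, corner_left he ha, mul_assoc, corner_right he hb]

lemma corner_sandwich (he : e * e = e) (z : R) : e * z * e = e * (e * z * e) * e := by
  rw [← mul_assoc, ← mul_assoc, he, mul_assoc (e*z) e e, he]

variable (hS : ∀ a ∈ S, ∀ b ∈ S, a * b ∈ S) (he : e * e = e) (hne : e ≠ 0) (heS : e ∈ S)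
  (hloc : ∀ x ∈ S, x = e * x * e → CUaux S e x ∨ CUaux S e (e - x))

include heS he in
lemma cu_e : CUaux S e e := ⟨e, heS, by rw [he, he], he, he⟩

include he hne hloc in
lemma idem_eq {q : R} (hqS : q ∈ S) (hq : q = e * q * e) (hqq : q * q = q) :
    q = 0 ∨ q = e := by
  rcases hloc q hqS hq with ⟨y, _, _, h1, h2⟩ | ⟨y, _, _, h1, h2⟩
  · right
    calc q = e * q := (corner_left he hq).symm
      _ = (y * q) * q := by rw [h2]
      _ = y * (q * q) := by rw [mul_assoc]
      _ = y * q := by rw [hqq]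
      _ = e := h2
  · left
    have h3 : (e - q) * q = 0 := by
      rw [sub_mul, corner_left he hq, hqq, sub_self]
    calc q = e * q := (corner_left he hq).symm
      _ = (y * (e - q)) * q := by rw [h2]
      _ = y * ((e - q) * q) := by rw [mul_assoc]
      _ = 0 := by rw [h3, mul_zero]

include hS he hne hloc in
lemma cu_of_left_inv {x r : R} (hxS : x ∈ S) (hx : x = e * x * e)
    (hrS : r ∈ S) (hr : r = e * r * e) (hrx : r * x = e) : CUaux S e x := by
  have hqS : x * r ∈ S := hS x hxS r hrS
  have hq : x * r = e * (x * r) * e := corner_mul he hx hr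
  have hqq : (x * r) * (x * r) = x * r := by
    rw [mul_assoc x r (x*r), ← mul_assoc r x r, hrx, corner_left he hr]
  rcases idem_eq he hne hloc hqS hq hqq with h0 | h1
  · exfalso
    apply hne
    have : r * ((x * r) * x) = e := by
      rw [← mul_assoc, ← mul_assoc, hrx, corner_left he hr, hrx]
    rw [h0, zero_mul, mul_zero] at this
    exact this.symm
  · exact ⟨r, hrS, hr, h1, hrx⟩

include hS he hne hloc in
lemma cu_of_right_inv {x r : R} (hxS : x ∈ S) (hx : x = e * x * e)
    (hrS : r ∈ S) (hr : r = e * r * e) (hxr : x * r = e) : CUaux S e x := by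
  have hqS : r * x ∈ S := hS r hrS x hxS
  have hq : r * x = e * (r * x) * e := corner_mul he hr hx
  have hqq : (r * x) * (r * x) = r * x := by
    rw [mul_assoc r x (r*x), ← mul_assoc x r x, hxr, corner_left he hx]
  rcases idem_eq he hne hloc hqS hq hqq with h0 | h1
  · exfalso
    apply hne
    have : x * ((r * x) * r) = e := by
      rw [← mul_assoc, ← mul_assoc, hxr, corner_left he hx, hxr]
    rw [h0, zero_mul, mul_zero] at this
    exact this.symm
  · exact ⟨r, hrS, hr, hxr, h1⟩

include hS he hne hloc in
lemma cu_add {a b : R} (haS : a ∈ S) (ha : a = e * a * e) (hbS : b ∈ S) (hb : b = e * b * e)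
    (hna : ¬ CUaux S e a) (hnb : ¬ CUaux S e b) : ¬ CUaux S e (a + b) := by
  rintro ⟨y, hyS, hy, h1, h2⟩
  have hsum : y * a + y * b = e := by rw [← mul_add]; exact h2
  have hyaS : y * a ∈ S := hS y hyS a haS
  have hya : y * a = e * (y * a) * e := corner_mul he hy ha
  rcases hloc _ hyaS hya with ⟨z, hzS, hz, hz1, hz2⟩ | ⟨z, hzS, hz, hz1, hz2⟩
  · exact hna <| cu_of_left_inv hS he hne hloc haS ha (hS z hzS y hyS)
      (corner_mul he hz hy) (by rw [mul_assoc]; exact hz2)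
  · have heya : e - y * a = y * b := by rw [← hsum, add_sub_cancel_left]
    rw [heya] at hz2
    exact hnb <| cu_of_left_inv hS he hne hloc hbS hb (hS z hzS y hyS)
      (corner_mul he hz hy) (by rw [mul_assoc]; exact hz2)

lemma corner_list_sum (he : e * e = e) :
    ∀ l : List R, (∀ a ∈ l, a ∈ S ∧ a = e * a * e) →
    l.sum ∈ S ∧ l.sum = e * l.sum * e := by
  intro l
  induction l with
  | nil => exact fun _ => ⟨zero_mem S, by simp⟩
  | cons c s ihs =>
    intro hmem
    have hc := hmem c List.mem_cons_self
    have hs := ihs (fun x hx => hmem x (List.mem_cons_of_mem c hx))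
    refine ⟨by rw [List.sum_cons]; exact add_mem hc.1 hs.1, ?_⟩
    rw [List.sum_cons, mul_add, add_mul, ← hc.2, ← hs.2]

include hS he hne hloc in
lemma cu_of_list_sum : ∀ l : List R, (∀ a ∈ l, a ∈ S ∧ a = e * a * e) →
    CUaux S e l.sum → ∃ a ∈ l, CUaux S e a := by
  intro l
  induction l with
  | nil =>
    intro _ ⟨y, _, _, h1, _⟩
    exact absurd (by rw [← h1, List.sum_nil, zero_mul]) hne.symm
  | cons a t ih =>
    intro hmem hcu
    rw [List.sum_cons] at hcu
    by_cases hA : CUaux S e a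
    · exact ⟨a, List.mem_cons_self, hA⟩
    by_cases hB : CUaux S e t.sum
    · obtain ⟨b, hb, hcub⟩ := ih (fun x hx => hmem x (List.mem_cons_of_mem a hx)) hB
      exact ⟨b, List.mem_cons_of_mem a hb, hcub⟩
    · have htS := corner_list_sum he t (fun x hx => hmem x (List.mem_cons_of_mem a hx))
      have h0 := hmem a List.mem_cons_self
      exact absurd hcu (cu_add hS he hne hloc h0.1 h0.2 htS.1 htS.2 hA hB)

end Corner


section Helpers

lemma list_sum_map_neg {ι R : Type*} [Ring R] (l : List ι) (f : ι → R) :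
    (l.map fun x => -f x).sum = -(l.map f).sum := by
  induction l with
  | nil => simp
  | cons a t ih => simp only [List.map_cons, List.sum_cons, ih, neg_add]

lemma exists_list_of_mem_closure {Λ : Type*} [Ring Λ] {T U : AddSubgroup Λ} {x : Λ}
    (hx : x ∈ AddSubgroup.closure ((T : Set Λ) * (U : Set Λ))) :
    ∃ l : List (Λ × Λ), (∀ p ∈ l, p.1 ∈ T ∧ p.2 ∈ U) ∧
      (l.map fun p => p.1 * p.2).sum = x := by
  refine AddSubgroup.closure_induction
    (p := fun x _ => ∃ l : List (Λ × Λ), (∀ p ∈ l, p.1 ∈ T ∧ p.2 ∈ U) ∧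
      (l.map fun p => p.1 * p.2).sum = x) ?_ ?_ ?_ ?_ hx
  · rintro a ⟨s, hs, t, ht, rfl⟩
    refine ⟨[(s, t)], ?_, by simp⟩
    intro p hp
    simp only [List.mem_singleton] at hp
    subst hp
    exact ⟨hs, ht⟩
  · exact ⟨[], by simp, by simp⟩
  · rintro x y _ _ ⟨l1, h1, hs1⟩ ⟨l2, h2, hs2⟩
    exact ⟨l1 ++ l2, fun p hp => (List.mem_append.1 hp).elim (h1 p) (h2 p),
      by rw [List.map_append, List.sum_append, hs1, hs2]⟩
  · rintro x _ ⟨l, h, hsx⟩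
    refine ⟨l.map fun p => (-p.1, p.2), ?_, ?_⟩
    · intro p hp
      obtain ⟨q, hq, rfl⟩ := List.mem_map.1 hp
      exact ⟨neg_mem (h q hq).1, (h q hq).2⟩
    · rw [List.map_map]
      have hc : ((fun p : Λ × Λ => p.1 * p.2) ∘ fun p : Λ × Λ => (-p.1, p.2))
          = fun p : Λ × Λ => -(p.1 * p.2) := by
        funext p
        simp
      rw [hc]
      rw [show (fun p : Λ × Λ => -(p.1 * p.2)) = (fun p : Λ × Λ => -((fun q : Λ × Λ => q.1 * q.2) p)) from rfl]
      rw [list_sum_map_neg, hsx]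

end Helpers

/-- A strong grading of the ring `Λ` by the group `G`: `Λ` is the internal direct
sum of the additive subgroups `A g`, and `A g * A h = A (g * h)` for all `g, h`. -/
structure IsStrongGrading {G Λ : Type*} [Group G] [Ring Λ] [DecidableEq G]
    (A : G → AddSubgroup Λ) : Prop where
  internal : DirectSum.IsInternal A
  one_mem : (1 : Λ) ∈ A 1
  mul_mem : ∀ (g h : G), ∀ a ∈ A g, ∀ b ∈ A h, a * b ∈ A (g * h)
  strong : ∀ g h : G, A (g * h) ≤ AddSubgroup.closure ((A g : Set Λ) * (A h : Set Λ))

/-- `Λ_g ≅ Λ_h` as `Δ`-bimodules (`Δ = Λ_1`): an additive equivalence compatible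
with left and right multiplication by elements of the identity component. -/
def ComponentBimodIso {G Λ : Type*} [Group G] [Ring Λ]
    (A : G → AddSubgroup Λ) (g h : G) : Prop :=
  ∃ f : A g ≃+ A h,
    (∀ d ∈ A (1 : G), ∀ x y : A g, (y : Λ) = d * (x : Λ) → ((f y : Λ) = d * (f x : Λ))) ∧
    (∀ d ∈ A (1 : G), ∀ x y : A g, (y : Λ) = (x : Λ) * d → ((f y : Λ) = (f x : Λ) * d))

/-- A ring is *semiperfect* iff `1` is a sum of orthogonal idempotents each of
whose corner rings `eRe` is local. -/
def IsSemiperfectRing (R : Type*) [Ring R] : Prop :=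
  ∃ (n : ℕ) (e : Fin n → R),
    (∀ i, e i * e i = e i) ∧ (∀ i j, i ≠ j → e i * e j = 0) ∧ (∑ i, e i) = 1 ∧
    ∀ i, e i ≠ 0 ∧ ∀ x : R, x = e i * x * e i →
      (∃ y : R, y = e i * y * e i ∧ x * y = e i ∧ y * x = e i) ∨
      (∃ y : R, y = e i * y * e i ∧ (e i - x) * y = e i ∧ y * (e i - x) = e i)

/-- A ring is *prime* iff `aRb = 0` implies `a = 0` or `b = 0` (and it is nonzero). -/
def IsPrimeRing (R : Type*) [Ring R] : Prop :=
  (∀ a b : R, (∀ x : R, a * x * b = 0) → a = 0 ∨ b = 0) ∧ (0 : R) ≠ 1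

/-- A semiperfect ring is *basic* iff `1` is a sum of orthogonal idempotents with
local corner rings which are pairwise non-isomorphic (no two of the corresponding
indecomposable projectives `Re i` are isomorphic, witnessed by elements
`u ∈ e i R e j`, `v ∈ e j R e i` with `uv = e i`, `vu = e j`). -/
def IsBasicSemiperfectRing (R : Type*) [Ring R] : Prop :=
  ∃ (n : ℕ) (e : Fin n → R),
    (∀ i, e i * e i = e i) ∧ (∀ i j, i ≠ j → e i * e j = 0) ∧ (∑ i, e i) = 1 ∧
    (∀ i, e i ≠ 0 ∧ ∀ x : R, x = e i * x * e i →
      (∃ y : R, y = e i * y * e i ∧ x * y = e i ∧ y * x = e i) ∨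
      (∃ y : R, y = e i * y * e i ∧ (e i - x) * y = e i ∧ y * (e i - x) = e i)) ∧
    ∀ i j, i ≠ j → ¬∃ u v : R,
      u = e i * u * e j ∧ v = e j * v * e i ∧ u * v = e i ∧ v * u = e j

/-- Let `Λ` be strongly `G`-graded with identity component
`Δ = Λ_1` semiperfect. If `Δ` is prime and basic, then `Λ` is a crossed product:
each `Λ_g` is free of rank one as a left `Δ`-module, i.e. `Λ_g = Δu` for some
`u` with trivial left annihilator in `Δ`. -/
theorem crossedProduct_of_prime_basic {G Λ : Type*} [Group G] [Ring Λ] [DecidableEq G]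
    (A : G → AddSubgroup Λ) (hA : IsStrongGrading A)
    (D : Subring Λ) (hD : (D : Set Λ) = (A (1 : G) : Set Λ))
    (hsp : IsSemiperfectRing D) (hprime : IsPrimeRing D)
    (hbasic : IsBasicSemiperfectRing D) :
    ∀ g : G, ∃ u ∈ A g,
      (∀ x ∈ A g, ∃ d ∈ A (1 : G), x = d * u) ∧
      (∀ d ∈ A (1 : G), d * u = 0 → d = 0) := by
  intro g
  -- membership helpers
  have memA : ∀ {g₁ g₂ : G} {a b : Λ}, a ∈ A g₁ → b ∈ A g₂ → a * b ∈ A (g₁ * g₂) :=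
    fun ha hb => hA.mul_mem _ _ _ ha _ hb
  have mem1 : ∀ {a b : Λ}, a ∈ A (1 : G) → b ∈ A (1 : G) → a * b ∈ A (1 : G) :=
    fun ha hb => by simpa using memA ha hb
  have memg : ∀ {a b : Λ}, a ∈ A (1 : G) → b ∈ A g → a * b ∈ A g :=
    fun ha hb => by simpa using memA ha hb
  have memg' : ∀ {a b : Λ}, a ∈ A g → b ∈ A (1 : G) → a * b ∈ A g :=
    fun ha hb => by simpa using memA ha hb
  have memgi : ∀ {a b : Λ}, a ∈ A (1 : G) → b ∈ A g⁻¹ → a * b ∈ A g⁻¹ :=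
    fun ha hb => by simpa using memA ha hb
  have memgi' : ∀ {a b : Λ}, a ∈ A g⁻¹ → b ∈ A (1 : G) → a * b ∈ A g⁻¹ :=
    fun ha hb => by simpa using memA ha hb
  have mem1gi : ∀ {a b : Λ}, a ∈ A g⁻¹ → b ∈ A g → a * b ∈ A (1 : G) :=
    fun ha hb => by simpa using memA ha hb
  have mem1g : ∀ {a b : Λ}, a ∈ A g → b ∈ A g⁻¹ → a * b ∈ A (1 : G) :=
    fun ha hb => by simpa using memA ha hb
  have hmemD : ∀ x : Λ, x ∈ A (1 : G) ↔ x ∈ D := fun x => by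
    rw [← SetLike.mem_coe, ← SetLike.mem_coe (p := D), hD]
  -- decomposition of 1
  have hcl : (1 : Λ) ∈ AddSubgroup.closure ((A g⁻¹ : Set Λ) * (A g : Set Λ)) :=
    hA.strong g⁻¹ g (by rw [inv_mul_cancel]; exact hA.one_mem)
  obtain ⟨l, hl, hlsum⟩ := exists_list_of_mem_closure hcl
  -- idempotent data
  obtain ⟨n, e, hee, heo, hesum, hcor, hnoniso⟩ := hbasic
  set E : Fin n → Λ := fun i => (e i : Λ) with hEdef
  have hE1 : ∀ i, E i ∈ A (1 : G) := fun i => (hmemD _).2 (e i).2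
  have hEe : ∀ i, E i * E i = E i := fun i => by
    have := congrArg Subtype.val (hee i)
    push_cast at this
    exact this
  have hEo : ∀ i j, i ≠ j → E i * E j = 0 := fun i j hij => by
    have := congrArg Subtype.val (heo i j hij)
    push_cast at this
    exact this
  have hEsum : (∑ t, E t) = 1 := by
    have := congrArg Subtype.val hesum
    push_cast at this
    exact this
  have hEne : ∀ i, E i ≠ 0 := fun i h => (hcor i).1 (Subtype.ext h)
  have assocE : ∀ (t : Fin n) (X : Λ), E t * (E t * X) = E t * X :=
    fun t X => by rw [← mul_assoc, hEe t]
  -- transfer of locality to Λ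
  have hlocE : ∀ i, ∀ x ∈ A (1 : G), x = E i * x * E i →
      CUaux (A (1 : G)) (E i) x ∨ CUaux (A (1 : G)) (E i) (E i - x) := by
    intro i x hx hxc
    have hxd : (⟨x, (hmemD x).1 hx⟩ : D) = e i * ⟨x, (hmemD x).1 hx⟩ * e i :=
      Subtype.ext (by push_cast; exact hxc)
    rcases (hcor i).2 _ hxd with ⟨y, hy1, hy2, hy3⟩ | ⟨y, hy1, hy2, hy3⟩
    · left
      refine ⟨(y : Λ), (hmemD _).2 y.2, ?_, ?_, ?_⟩
      · have := congrArg Subtype.val hy1; push_cast at this; exact this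
      · have := congrArg Subtype.val hy2; push_cast at this; exact this
      · have := congrArg Subtype.val hy3; push_cast at this; exact this
    · right
      refine ⟨(y : Λ), (hmemD _).2 y.2, ?_, ?_, ?_⟩
      · have := congrArg Subtype.val hy1; push_cast at this; exact this
      · have := congrArg Subtype.val hy2; push_cast at this; exact this
      · have := congrArg Subtype.val hy3; push_cast at this; exact this
  -- transfer of non-isomorphy to Λ
  have hnonisoE : ∀ i j, i ≠ j → ¬ ∃ u' v' : Λ, u' ∈ A (1 : G) ∧ v' ∈ A (1 : G) ∧
      u' = E i * u' * E j ∧ v' = E j * v' * E i ∧ u' * v' = E i ∧ v' * u' = E j := by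
    rintro i j hij ⟨u', v', hu1, hv1, hu2, hv2, huv, hvu⟩
    exact hnoniso i j hij ⟨⟨u', (hmemD _).1 hu1⟩, ⟨v', (hmemD _).1 hv1⟩,
      Subtype.ext (by push_cast; exact hu2), Subtype.ext (by push_cast; exact hv2),
      Subtype.ext (by push_cast; exact huv), Subtype.ext (by push_cast; exact hvu)⟩
  have hS : ∀ a ∈ A (1 : G), ∀ b ∈ A (1 : G), a * b ∈ A (1 : G) :=
    fun a ha b hb => mem1 ha hb
  -- Key step : for each i, `Λ_g e i ≅ Δ e j` for some j, with explicit data.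
  have key : ∀ i : Fin n, ∃ (j : Fin n) (ui wi : Λ), ui ∈ A g ∧ wi ∈ A g⁻¹ ∧
      E j * ui = ui ∧ ui * E i = ui ∧ wi * E j = wi ∧ ui * wi = E j ∧
      E i * (wi * ui) = E i := by
    intro i
    have hei := hEe i
    have hnei := hEne i
    -- stage A : some `E i * (γ δ) * E i` is a corner unit
    have hlA : ∀ a ∈ l.map (fun p : Λ × Λ => E i * (p.1 * p.2) * E i),
        a ∈ A (1 : G) ∧ a = E i * a * E i := by
      intro a ha
      obtain ⟨p, hp, rfl⟩ := List.mem_map.1 ha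
      obtain ⟨h1, h2⟩ := hl p hp
      exact ⟨mem1 (mem1 (hE1 i) (mem1gi h1 h2)) (hE1 i), corner_sandwich hei _⟩
    have hsumA : (l.map (fun p : Λ × Λ => E i * (p.1 * p.2) * E i)).sum = E i := by
      rw [show (fun p : Λ × Λ => E i * (p.1 * p.2) * E i)
            = (fun p : Λ × Λ => (fun q : Λ × Λ => E i * (q.1 * q.2)) p * E i) from rfl,
        List.sum_map_mul_right, List.sum_map_mul_left, hlsum, mul_one, hei]
    obtain ⟨a, haA, hcua⟩ := cu_of_list_sum hS hei hnei (hlocE i) _ hlA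
      (by rw [hsumA]; exact cu_e hei (hE1 i))
    obtain ⟨⟨γ, δ⟩, hpl, rfl⟩ := List.mem_map.1 haA
    obtain ⟨hγ1, hδ1⟩ := hl _ hpl
    simp only at hcua hγ1 hδ1
    -- stage B : some `E i * (γ * E j * δ) * E i` is a corner unit
    have hlB : ∀ a ∈ (List.finRange n).map (fun j => E i * (γ * E j * δ) * E i),
        a ∈ A (1 : G) ∧ a = E i * a * E i := by
      intro a ha
      obtain ⟨j, _, rfl⟩ := List.mem_map.1 ha
      exact ⟨mem1 (mem1 (hE1 i) (mem1gi (memgi' hγ1 (hE1 j)) hδ1)) (hE1 i),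
        corner_sandwich hei _⟩
    have hsumB : ((List.finRange n).map (fun j => E i * (γ * E j * δ) * E i)).sum
        = E i * (γ * δ) * E i := by
      have h1 : ((List.finRange n).map (fun j => E i * (γ * E j * δ) * E i))
          = ((List.finRange n).map (fun j => (fun j' : Fin n => E i * γ * E j') j * (δ * E i))) := by
        apply List.map_congr_left
        intro j _
        simp only [mul_assoc]
      rw [h1, List.sum_map_mul_right, List.sum_map_mul_left, ← Fin.sum_univ_def, hEsum,
        mul_one]
      simp only [mul_assoc]
    obtain ⟨b, hbB, hcub⟩ := cu_of_list_sum hS hei hnei (hlocE i) _ hlB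
      (by rw [hsumB]; exact hcua)
    obtain ⟨j, _, rfl⟩ := List.mem_map.1 hbB
    obtain ⟨θ, hθS, hθc, htθ, hθt⟩ := hcub
    -- computation rules
    have hθl : E i * θ = θ := corner_left hei hθc
    have hθr : θ * E i = θ := corner_right hei hθc
    have aθl : ∀ X : Λ, E i * (θ * X) = θ * X := fun X => by rw [← mul_assoc, hθl]
    have aθr : ∀ X : Λ, θ * (E i * X) = θ * X := fun X => by rw [← mul_assoc, hθr]
    have base2 : E i * (γ * (E j * (δ * θ))) = E i := by
      conv_rhs => rw [← htθ]
      simp only [mul_assoc, hθl]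
    have base1 : θ * (γ * (E j * (δ * E i))) = E i := by
      conv_rhs => rw [← hθt]
      simp only [mul_assoc, aθr]
    have R1 : ∀ X : Λ, θ * (γ * (E j * (δ * (θ * X)))) = θ * X := by
      intro X
      calc θ * (γ * (E j * (δ * (θ * X))))
          = (θ * (γ * (E j * (δ * E i)))) * (θ * X) := by simp only [mul_assoc, aθl]
        _ = E i * (θ * X) := by rw [base1]
        _ = θ * X := aθl X
    have R1' : θ * (γ * (E j * (δ * θ))) = θ := by
      calc θ * (γ * (E j * (δ * θ)))
          = (θ * (γ * (E j * (δ * E i)))) * θ := by simp only [mul_assoc, hθl]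
        _ = E i * θ := by rw [base1]
        _ = θ := hθl
    -- the data
    refine ⟨j, E j * (δ * θ), γ * E j, ?_, ?_, assocE j (δ * θ), ?_, ?_, ?_, ?_⟩
    · exact memg (hE1 j) (memg' hδ1 hθS)
    · exact memgi' hγ1 (hE1 j)
    · simp only [mul_assoc, hθr]
    · simp only [mul_assoc, hEe]
    · -- `q = u * w` is a nonzero idempotent of the local corner at j, hence `= E j`
      have hqS : (E j * (δ * θ)) * (γ * E j) ∈ A (1 : G) :=
        mem1g (memg (hE1 j) (memg' hδ1 hθS)) (memgi' hγ1 (hE1 j))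
      have hqc : (E j * (δ * θ)) * (γ * E j)
          = E j * ((E j * (δ * θ)) * (γ * E j)) * E j := by
        simp only [mul_assoc, assocE, hEe]
      have hqq : ((E j * (δ * θ)) * (γ * E j)) * ((E j * (δ * θ)) * (γ * E j))
          = (E j * (δ * θ)) * (γ * E j) := by
        simp only [mul_assoc, assocE, R1]
      rcases idem_eq (hEe j) (hEne j) (hlocE j) hqS hqc hqq with h0 | h1
      · exfalso
        have hfull : E i * ((γ * E j) * ((((E j * (δ * θ)) * (γ * E j))) * (E j * (δ * θ))))
            = E i := by
          simp only [mul_assoc, assocE, R1', base2]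
        rw [h0] at hfull
        simp only [zero_mul, mul_zero] at hfull
        exact hEne i hfull.symm
      · exact h1
    · simp only [mul_assoc, assocE, base2]
  choose k u w hu hw hEku hurE hwEk huw hEwu using key
  -- injectivity of k
  have hkinj : Function.Injective k := by
    intro i i' hk
    by_contra hne'
    apply hnonisoE i i' hne'
    have aurE : ∀ (t : Fin n) (X : Λ), u t * (E t * X) = u t * X :=
      fun t X => by rw [← mul_assoc, hurE t]
    have auw : ∀ (t : Fin n) (X : Λ), u t * (w t * X) = E (k t) * X :=
      fun t X => by rw [← mul_assoc, huw t]
    refine ⟨E i * (w i * u i'), E i' * (w i' * u i),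
      mem1 (hE1 i) (mem1gi (hw i) (hu i')),
      mem1 (hE1 i') (mem1gi (hw i') (hu i)), ?_, ?_, ?_, ?_⟩
    · simp only [mul_assoc, assocE, hurE]
    · simp only [mul_assoc, assocE, hurE]
    · calc (E i * (w i * u i')) * (E i' * (w i' * u i))
          = E i * (w i * (u i' * (w i' * u i))) := by simp only [mul_assoc, aurE]
        _ = E i * (w i * (E (k i') * u i)) := by rw [auw]
        _ = E i * (w i * (E (k i) * u i)) := by rw [hk]
        _ = E i * (w i * u i) := by rw [hEku]
        _ = E i := hEwu i
    · calc (E i' * (w i' * u i)) * (E i * (w i * u i'))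
          = E i' * (w i' * (u i * (w i * u i'))) := by simp only [mul_assoc, aurE]
        _ = E i' * (w i' * (E (k i) * u i')) := by rw [auw]
        _ = E i' * (w i' * (E (k i') * u i')) := by rw [hk]
        _ = E i' * (w i' * u i') := by rw [hEku]
        _ = E i' := hEwu i'
  have hkbij : Function.Bijective k := Finite.injective_iff_bijective.1 hkinj
  -- the generator
  refine ⟨∑ t, u t, sum_mem fun t _ => hu t, ?_, ?_⟩
  · -- every x ∈ A g is a left multiple of u
    intro x hx
    refine ⟨∑ t, (x * E t) * (w t * E (k t)), sum_mem fun t _ =>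
      mem1g (memg' hx (hE1 t)) (memgi' (hw t) (hE1 (k t))), ?_⟩
    have hterm0 : ∀ t s : Fin n, s ≠ t → ((x * E t) * (w t * E (k t))) * u s = 0 := by
      intro t s hst
      have h0 : E (k t) * u s = 0 := by
        rw [← hEku s, ← mul_assoc, hEo (k t) (k s) (fun h => hst (hkinj h).symm), zero_mul]
      calc ((x * E t) * (w t * E (k t))) * u s
          = (x * E t) * (w t * (E (k t) * u s)) := by simp only [mul_assoc]
        _ = 0 := by rw [h0, mul_zero, mul_zero]
    have hterm1 : ∀ t : Fin n, ((x * E t) * (w t * E (k t))) * u t = x * E t := by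
      intro t
      calc ((x * E t) * (w t * E (k t))) * u t
          = x * (E t * (w t * (E (k t) * u t))) := by simp only [mul_assoc]
        _ = x * (E t * (w t * u t)) := by rw [hEku t]
        _ = x * E t := by rw [hEwu t]
    symm
    rw [Finset.sum_mul]
    have hrow : ∀ t ∈ Finset.univ, ((x * E t) * (w t * E (k t))) * (∑ s, u s) = x * E t := by
      intro t _
      rw [Finset.mul_sum, Finset.sum_eq_single t (fun s _ hs => hterm0 t s hs)
        (by intro h; exact absurd (Finset.mem_univ t) h)]
      exact hterm1 t
    rw [Finset.sum_congr rfl hrow, ← Finset.mul_sum, hEsum, mul_one]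
  · -- trivial left annihilator
    intro d hd hdu
    have huv : (∑ t, u t) * (∑ s, E s * w s) = 1 := by
      have hterm0 : ∀ t s : Fin n, s ≠ t → u t * (E s * w s) = 0 := by
        intro t s hst
        calc u t * (E s * w s) = (u t * E t) * (E s * w s) := by rw [hurE t]
          _ = u t * ((E t * E s) * w s) := by simp only [mul_assoc]
          _ = 0 := by rw [hEo t s (fun h => hst h.symm), zero_mul, mul_zero]
      have hterm1 : ∀ t : Fin n, u t * (E t * w t) = E (k t) := by
        intro t
        rw [← mul_assoc, hurE t, huw t]
      rw [Finset.sum_mul]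
      have hrow : ∀ t ∈ Finset.univ, u t * (∑ s, E s * w s) = E (k t) := by
        intro t _
        rw [Finset.mul_sum, Finset.sum_eq_single t (fun s _ hs => hterm0 t s hs)
          (by intro h; exact absurd (Finset.mem_univ t) h)]
        exact hterm1 t
      rw [Finset.sum_congr rfl hrow, hkbij.sum_comp E, hEsum]
    calc d = d * ((∑ t, u t) * (∑ s, E s * w s)) := by rw [huv, mul_one]
      _ = (d * ∑ t, u t) * (∑ s, E s * w s) := by rw [mul_assoc]
      _ = 0 := by rw [hdu, zero_mul]
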